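/- Suppose AD_ℝ and DC_ℝ hold and ℝ surjects onto S. Then the quasi-club filter μ_S is an ultrafilter on [S]^ω: for every A ⊆ [S]^ω, either A ∈ μ_S or the complement of A is in μ_S. -/

import Mathlib

open Set

universe u

/-- The collection `[S]^ω` of countable subsets of `S`. -/
abbrev Cw (S : Type u) := {σ : Set S // σ.Countable}

/-- Dependent choice for the set `S`. -/
def DCax (S : Type u) : Prop :=
  ∀ R : S → S → Prop, (∀ x, ∃ y, R x y) →
    ∀ x : S, ∃ f : ℕ → S, f 0 = x ∧ ∀ n, R (f n) (f (n + 1))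

/-- `F` is a filter on `[S]^ω`: contains everything, upward closed, closed under
binary intersections. -/
def IsSetFilter (S : Type u) (F : Set (Set (Cw S))) : Prop :=
  Set.univ ∈ F ∧ (∀ A B : Set (Cw S), A ∈ F → A ⊆ B → B ∈ F) ∧
    (∀ A B : Set (Cw S), A ∈ F → B ∈ F → A ∩ B ∈ F)

/-- `F` is fine. -/
def IsFine (S : Type u) (F : Set (Set (Cw S))) : Prop :=
  ∀ τ : Cw S, {σ : Cw S | τ.1 ⊆ σ.1} ∈ F

/-- `F` has the diagonal intersection property. -/
def HasDiagInter (S : Type u) (F : Set (Set (Cw S))) : Prop :=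
  ∀ B : S → Set (Cw S), (∀ a : S, B a ∈ F) →
    {σ : Cw S | ∀ a ∈ σ.1, σ ∈ B a} ∈ F

/-- `F` is normal: every regressive-like assignment on an `F`-positive set is
constant-containing on an `F`-positive set. -/
def IsNormalFilter (S : Type u) (F : Set (Set (Cw S))) : Prop :=
  ∀ A : Set (Cw S), Aᶜ ∉ F →
    ∀ G : Cw S → Cw S, (∀ σ ∈ A, (G σ).1.Nonempty ∧ (G σ).1 ⊆ σ.1) →
      ∃ a : S, {σ : Cw S | σ ∈ A ∧ a ∈ (G σ).1}ᶜ ∉ F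

/-- A supercompactness measure on `[S]^ω`: a (proper) normal fine ultrafilter. -/
def IsSCMeasure (S : Type u) (F : Set (Set (Cw S))) : Prop :=
  IsSetFilter S F ∧ ∅ ∉ F ∧ IsFine S F ∧ HasDiagInter S F ∧
    ∀ A : Set (Cw S), A ∈ F ∨ Aᶜ ∈ F

/-- A quasi-strategy for Player II (who moves at odd-length-so-far positions,
i.e. positions of odd length are II's turn... here: II moves when the current
position has odd length). -/
def IsQStratII (S : Type u) (T : Set (List S)) : Prop :=
  [] ∈ T ∧ (∀ p ∈ T, Even p.length → ∀ a : S, p ++ [a] ∈ T) ∧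
    (∀ p ∈ T, ¬ Even p.length → ∃ b : S, p ++ [b] ∈ T)

/-- A quasi-strategy for Player I. -/
def IsQStratI (S : Type u) (T : Set (List S)) : Prop :=
  [] ∈ T ∧ (∀ p ∈ T, ¬ Even p.length → ∀ b : S, p ++ [b] ∈ T) ∧
    (∀ p ∈ T, Even p.length → ∃ a : S, p ++ [a] ∈ T)

/-- The infinite play `f` is consistent with the tree `T`. -/
def PlayThrough (S : Type u) (T : Set (List S)) (f : ℕ → S) : Prop :=
  ∀ n : ℕ, (List.ofFn fun i : Fin n => f i) ∈ T

/-- The countable set of all elements played in the play `f`. -/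
def playSet (S : Type u) (f : ℕ → S) : Cw S :=
  ⟨Set.range f, Set.countable_range f⟩

/-- `T` is a winning quasi-strategy for Player II in the club game on `S` with payoff `A`. -/
def WinsClubII (S : Type u) (T : Set (List S)) (A : Set (Cw S)) : Prop :=
  IsQStratII S T ∧ ∀ f : ℕ → S, PlayThrough S T f → playSet S f ∈ A

/-- `T` is a winning quasi-strategy for Player I in the club game on `S` with payoff `A`
(for Player II). -/
def WinsClubI (S : Type u) (T : Set (List S)) (A : Set (Cw S)) : Prop :=
  IsQStratI S T ∧ ∀ f : ℕ → S, PlayThrough S T f → playSet S f ∉ A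

/-- The quasi-club filter `μ_S`. -/
def qclub (S : Type u) : Set (Set (Cw S)) :=
  {A | ∃ T : Set (List S), WinsClubII S T A}

/-- Winning quasi-strategy for Player II in the length-ω game on `S` with payoff `A ⊆ S^ω`. -/
def WinsGameQSII (S : Type u) (T : Set (List S)) (A : Set (ℕ → S)) : Prop :=
  IsQStratII S T ∧ ∀ f : ℕ → S, PlayThrough S T f → f ∈ A

/-- Winning quasi-strategy for Player I in the length-ω game on `S` with payoff `A ⊆ S^ω`
(for Player II). -/
def WinsGameQSI (S : Type u) (T : Set (List S)) (A : Set (ℕ → S)) : Prop :=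
  IsQStratI S T ∧ ∀ f : ℕ → S, PlayThrough S T f → f ∉ A

/-- The play `f` follows the strategy `s` for Player I (who moves at even rounds). -/
def StratFollowsI (S : Type u) (s : List S → S) (f : ℕ → S) : Prop :=
  ∀ n : ℕ, Even n → f n = s (List.ofFn fun i : Fin n => f i)

/-- The play `f` follows the strategy `s` for Player II (who moves at odd rounds). -/
def StratFollowsII (S : Type u) (s : List S → S) (f : ℕ → S) : Prop :=
  ∀ n : ℕ, ¬ Even n → f n = s (List.ofFn fun i : Fin n => f i)

/-- `AD_ℝ`: every length-ω two-player game with moves from `ℝ` is determined. -/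
def ADReal : Prop :=
  ∀ A : Set (ℕ → ℝ),
    (∃ s : List ℝ → ℝ, ∀ f : ℕ → ℝ, StratFollowsI ℝ s f → f ∉ A) ∨
    (∃ s : List ℝ → ℝ, ∀ f : ℕ → ℝ, StratFollowsII ℝ s f → f ∈ A)


section AuxQclub

variable {S : Type}

/-- Canonical function associated to a list (default value `d`). -/
noncomputable def toFn (d : S) (p : List S) : ℕ → S := fun i => p.getD i d

/-- A quasi-strategy for II determined by a "move" function `mv` that only
depends on the history strictly below the current index. -/
def Tmv (d : S) (mv : (ℕ → S) → ℕ → S) : Set (List S) :=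
  {p | ∀ k, (hk : k < p.length) → ¬ Even k → p.get ⟨k, hk⟩ = mv (toFn d p) k}

lemma toFn_lt (d : S) (p : List S) {i : ℕ} (h : i < p.length) :
    toFn d p i = p.get ⟨i, h⟩ := by
  simp [toFn, List.getD_eq_getElem?_getD, List.getElem?_eq_getElem h]

lemma toFn_append_lt (d : S) (p : List S) (a : S) {i : ℕ} (h : i < p.length) :
    toFn d (p ++ [a]) i = toFn d p i := by
  rw [toFn_lt d (p ++ [a]) (by simp; omega), toFn_lt d p h]
  simp only [List.get_eq_getElem]; exact List.getElem_append_left h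

lemma toFn_append_self (d : S) (p : List S) (a : S) :
    toFn d (p ++ [a]) p.length = a := by
  simp [toFn, List.getD_eq_getElem?_getD]

lemma toFn_ofFn (d : S) (f : ℕ → S) (n : ℕ) {i : ℕ} (h : i < n) :
    toFn d (List.ofFn fun j : Fin n => f j) i = f i := by
  rw [toFn_lt d _ (by simpa using h)]
  simp

section TmvLemmas

variable (d : S) (mv : (ℕ → S) → ℕ → S)
  (Hmv : ∀ f f' : ℕ → S, ∀ k, (∀ i < k, f i = f' i) → mv f k = mv f' k)

include Hmv

lemma Tmv_isQStratII : IsQStratII S (Tmv d mv) := by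
  refine ⟨fun k hk _ => absurd hk (by simp), ?_, ?_⟩
  · intro p hp hev a k hk hkodd
    have hlen : k < p.length := by
      rcases Nat.lt_succ_iff_lt_or_eq.1 (by simpa using hk) with h | h
      · exact h
      · exact absurd (h ▸ hev) hkodd
    have h1 : (p ++ [a]).get ⟨k, hk⟩ = p.get ⟨k, hlen⟩ := by
      simp only [List.get_eq_getElem]; exact List.getElem_append_left hlen
    rw [h1, hp k hlen hkodd]
    exact Hmv _ _ k (fun i hi => (toFn_append_lt d p a (hi.trans hlen)).symm)
  · intro p hp hodd
    refine ⟨mv (toFn d p) p.length, fun k hk hkodd => ?_⟩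
    rcases Nat.lt_succ_iff_lt_or_eq.1 (by simpa using hk) with h | h
    · have h1 : (p ++ [mv (toFn d p) p.length]).get ⟨k, hk⟩ = p.get ⟨k, h⟩ :=
        by simp only [List.get_eq_getElem]; exact List.getElem_append_left h
      rw [h1, hp k h hkodd]
      exact Hmv _ _ k (fun i hi => (toFn_append_lt d p _ (hi.trans h)).symm)
    · subst h
      have h1 : (p ++ [mv (toFn d p) p.length]).get ⟨p.length, hk⟩
          = mv (toFn d p) p.length := by
        simp
      rw [h1]
      refine (Hmv _ _ p.length (fun i hi => toFn_append_lt d p _ hi)).symm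

lemma Tmv_playThrough {f : ℕ → S} (hf : PlayThrough S (Tmv d mv) f) :
    ∀ k, ¬ Even k → f k = mv f k := by
  intro k hk
  have hmem := hf (k + 1)
  have hlen : k < (List.ofFn fun i : Fin (k+1) => f i).length := by simp
  have := hmem k hlen hk
  have hget : (List.ofFn fun i : Fin (k+1) => f i).get ⟨k, hlen⟩ = f k := by
    rw [List.get_ofFn]
    rfl
  rw [hget] at this
  rw [this]
  exact Hmv _ _ k (fun i hi => toFn_ofFn d f (k+1) (hi.trans k.lt_succ_self))

end TmvLemmas

/-- Iteratively built auxiliary play on `ℝ` from a step function. -/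
def auxP (st : List ℝ → ℕ → ℝ) : ℕ → List ℝ
  | 0 => []
  | n + 1 => auxP st n ++ [st (auxP st n) n]

/-- The infinite play induced by the step function. -/
def auxSeq (st : List ℝ → ℕ → ℝ) (n : ℕ) : ℝ := st (auxP st n) n

lemma auxP_eq_ofFn (st : List ℝ → ℕ → ℝ) (n : ℕ) :
    auxP st n = List.ofFn fun i : Fin n => auxSeq st i := by
  induction n with
  | zero => rfl
  | succ n ih =>
    rw [List.ofFn_succ']
    simp only [Fin.coe_castSucc, Fin.val_last, List.concat_eq_append]
    rw [← ih]
    rfl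

lemma auxP_congr (st st' : List ℝ → ℕ → ℝ) (N : ℕ)
    (h : ∀ n < N, ∀ L, st L n = st' L n) :
    auxP st N = auxP st' N := by
  induction N with
  | zero => rfl
  | succ n ih =>
    have hn : auxP st n = auxP st' n := ih (fun m hm L => h m (hm.trans n.lt_succ_self) L)
    show auxP st n ++ [st (auxP st n) n] = auxP st' n ++ [st' (auxP st' n) n]
    rw [hn, h n n.lt_succ_self]

end AuxQclub

/-- under `AD_ℝ + DC_ℝ`, the quasi-club filter on a surjective image
of `ℝ` is an ultrafilter. -/
theorem qclub_ultrafilter_of_ADReal (S : Type) (hAD : ADReal) (hDC : DCax ℝ)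
    (π : ℝ → S) (hπ : Function.Surjective π) :
    ∀ A : Set (Cw S), A ∈ qclub S ∨ Aᶜ ∈ qclub S := by
  intro A
  classical
  set d : S := π 0 with hd
  set σ : S → ℝ := Function.surjInv hπ with hσ
  have hσπ : ∀ b : S, π (σ b) = b := fun b => Function.surjInv_eq hπ b
  set B : Set (ℕ → ℝ) := {g | playSet S (π ∘ g) ∈ A} with hB
  rcases hAD B with ⟨s, hs⟩ | ⟨s, hs⟩
  · -- Player I wins the real game: strategy stealing gives II a quasi-strategy for Aᶜ
    right
    set st : (ℕ → S) → List ℝ → ℕ → ℝ :=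
      fun f L n => if Even n then s L else σ (f (n - 1)) with hst
    set mv : (ℕ → S) → ℕ → S := fun f k => π (s (auxP (st f) (k - 1))) with hmv
    have Hmv : ∀ f f' : ℕ → S, ∀ k, (∀ i < k, f i = f' i) → mv f k = mv f' k := by
      intro f f' k hff
      simp only [hmv]
      rw [auxP_congr (st f) (st f') (k - 1) ?_]
      intro n hn L
      simp only [hst]
      by_cases h : Even n
      · simp [h]
      · simp only [h, if_false]
        rw [hff (n - 1) (by omega)]
    refine ⟨Tmv d mv, Tmv_isQStratII d mv Hmv, ?_⟩
    intro f hf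
    have hodd := Tmv_playThrough d mv Hmv hf
    set h : ℕ → ℝ := auxSeq (st f) with hh
    have hstep_even : ∀ n, Even n → h n = s (auxP (st f) n) := by
      intro n hn
      show st f (auxP (st f) n) n = _
      simp [hst, hn]
    have hstep_odd : ∀ n, ¬ Even n → h n = σ (f (n - 1)) := by
      intro n hn
      show st f (auxP (st f) n) n = _
      simp [hst, hn]
    have hI : StratFollowsI ℝ s h := by
      intro n hn
      rw [hstep_even n hn, ← auxP_eq_ofFn]
    have hnotB : h ∉ B := hs h hI
    have hπh_even : ∀ n, Even n → π (h n) = f (n + 1) := by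
      intro n hn
      rw [hstep_even n hn]
      have hodd1 : ¬ Even (n + 1) := by simpa [Nat.even_add_one] using hn
      have := hodd (n + 1) hodd1
      simp only [hmv, Nat.add_sub_cancel] at this
      exact this.symm
    have hπh_odd : ∀ n, ¬ Even n → π (h n) = f (n - 1) := by
      intro n hn
      rw [hstep_odd n hn, hσπ]
    have hrange : Set.range f = Set.range (π ∘ h) := by
      ext x
      constructor
      · rintro ⟨m, rfl⟩
        by_cases hm : Even m
        · refine ⟨m + 1, ?_⟩
          have h1 : ¬ Even (m + 1) := by simpa [Nat.even_add_one] using hm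
          show π (h (m + 1)) = f m
          rw [hπh_odd (m + 1) h1, Nat.add_sub_cancel]
        · refine ⟨m - 1, ?_⟩
          have hm1 : m ≠ 0 := by rintro rfl; exact hm Even.zero
          have h1 : Even (m - 1) := by
            rcases Nat.not_even_iff_odd.1 hm with ⟨r, hr⟩
            exact ⟨r, by omega⟩
          show π (h (m - 1)) = f m
          rw [hπh_even (m - 1) h1]
          congr 1
          omega
      · rintro ⟨n, rfl⟩
        by_cases hn : Even n
        · exact ⟨n + 1, (hπh_even n hn).symm⟩
        · exact ⟨n - 1, (hπh_odd n hn).symm⟩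
    have hps : playSet S f = playSet S (π ∘ h) := Subtype.ext hrange
    intro hcon
    exact hnotB (by show playSet S (π ∘ h) ∈ A; rw [← hps]; exact hcon)
  · -- Player II wins the real game: transfer the strategy to a quasi-strategy for A
    left
    set st : (ℕ → S) → List ℝ → ℕ → ℝ :=
      fun f L n => if Even n then σ (f n) else s L with hst
    set mv : (ℕ → S) → ℕ → S := fun f k => π (s (auxP (st f) k)) with hmv
    have Hmv : ∀ f f' : ℕ → S, ∀ k, (∀ i < k, f i = f' i) → mv f k = mv f' k := by
      intro f f' k hff
      simp only [hmv]
      rw [auxP_congr (st f) (st f') k ?_]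
      intro n hn L
      simp only [hst]
      by_cases h : Even n
      · simp only [h, if_true]
        rw [hff n hn]
      · simp [h]
    refine ⟨Tmv d mv, Tmv_isQStratII d mv Hmv, ?_⟩
    intro f hf
    have hodd := Tmv_playThrough d mv Hmv hf
    set g : ℕ → ℝ := auxSeq (st f) with hg
    have hstep_even : ∀ n, Even n → g n = σ (f n) := by
      intro n hn
      show st f (auxP (st f) n) n = _
      simp [hst, hn]
    have hstep_odd : ∀ n, ¬ Even n → g n = s (auxP (st f) n) := by
      intro n hn
      show st f (auxP (st f) n) n = _
      simp [hst, hn]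
    have hII : StratFollowsII ℝ s g := by
      intro n hn
      rw [hstep_odd n hn, ← auxP_eq_ofFn]
    have hgB : g ∈ B := hs g hII
    have hπg : π ∘ g = f := by
      funext n
      by_cases hn : Even n
      · show π (g n) = f n
        rw [hstep_even n hn, hσπ]
      · show π (g n) = f n
        rw [hstep_odd n hn]
        exact (hodd n hn).symm
    have : playSet S (π ∘ g) ∈ A := hgB
    rwa [hπg] at this
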